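/- Let G and H be finite simple graphs that are not both complete. (i) If the domination number γ(G) = 1, then μt(G + H) = n(G) + n(H) − 1. (ii) If γ(G) ≠ 1 and γ(H) ≠ 1, then μt(G + H) = n(G) + n(H) − 2. -/

import Mathlib

open SimpleGraph

/-- `X` is a total mutual-visibility set of `G`: every two vertices of `G` are `X`-visible,
i.e. joined by a shortest path whose internal vertices avoid `X`. -/
def IsTMVSet {V : Type*} (G : SimpleGraph V) (X : Set V) : Prop :=
  ∀ x y : V, ∃ p : G.Walk x y, p.length = G.dist x y ∧
    ∀ w ∈ p.support, w ≠ x → w ≠ y → w ∉ X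

/-- The total mutual-visibility number of `G`. -/
noncomputable def muT {V : Type*} (G : SimpleGraph V) : ℕ :=
  sSup {n : ℕ | ∃ X : Set V, IsTMVSet G X ∧ X.ncard = n}

/-- `D` is a dominating set of `G`. -/
def IsDomSet {V : Type*} (G : SimpleGraph V) (D : Set V) : Prop :=
  ∀ v : V, v ∉ D → ∃ u ∈ D, G.Adj u v

/-- The domination number of `G`. -/
noncomputable def gammaDom {V : Type*} (G : SimpleGraph V) : ℕ :=
  sInf {n : ℕ | ∃ D : Set V, IsDomSet G D ∧ D.ncard = n}

/-- `D` is a connected dominating set of `G`. -/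
def IsConnDomSet {V : Type*} (G : SimpleGraph V) (D : Set V) : Prop :=
  IsDomSet G D ∧ (G.induce D).Connected

/-- The connected domination number of `G`. -/
noncomputable def gammaConnDom {V : Type*} (G : SimpleGraph V) : ℕ :=
  sInf {n : ℕ | ∃ D : Set V, IsConnDomSet G D ∧ D.ncard = n}

/-- The closed neighborhood of a vertex. -/
def closedNbhd {V : Type*} (G : SimpleGraph V) (v : V) : Set V :=
  insert v (G.neighborSet v)

/-- The set of simplicial vertices of `G`. -/
def simpSet {V : Type*} (G : SimpleGraph V) : Set V :=
  {v | G.IsClique (G.neighborSet v)}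

/-- The set `P(G)` of vertices that appear as the unique common closed neighbor of
two vertices. -/
def pSet {V : Type*} (G : SimpleGraph V) : Set V :=
  {v | ∃ u w : V, closedNbhd G u ∩ closedNbhd G w = {v}}

/-- The set `C(G)` of vertices belonging to every maximum total mutual-visibility set. -/
def compulsorySet {V : Type*} (G : SimpleGraph V) : Set V :=
  {v | ∀ X : Set V, IsTMVSet G X → X.ncard = muT G → v ∈ X}

/-- The set `F(G)` of vertices belonging to no maximum total mutual-visibility set. -/
def forbiddenSet {V : Type*} (G : SimpleGraph V) : Set V :=
  {v | ∀ X : Set V, IsTMVSet G X → X.ncard = muT G → v ∉ X}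

/-- The independent total mutual-visibility number of `G`. -/
noncomputable def muIT {V : Type*} (G : SimpleGraph V) : ℕ :=
  sSup {n : ℕ | ∃ X : Set V, IsTMVSet G X ∧ (∀ u ∈ X, ∀ v ∈ X, ¬ G.Adj u v) ∧ X.ncard = n}

/-- The join `G + H` of two graphs. -/
def joinGraph {V W : Type*} (G : SimpleGraph V) (H : SimpleGraph W) :
    SimpleGraph (V ⊕ W) :=
  SimpleGraph.fromRel (fun x y =>
    (∃ a b, x = Sum.inl a ∧ y = Sum.inl b ∧ G.Adj a b) ∨
    (∃ a b, x = Sum.inr a ∧ y = Sum.inr b ∧ H.Adj a b) ∨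
    (∃ a b, x = Sum.inl a ∧ y = Sum.inr b))

/-- The corona product `G ⊙ H`: a copy of `G` together with a copy `Hᵢ` of `H` for each
vertex `uᵢ` of `G`, where `uᵢ` is joined to all vertices of `Hᵢ`. -/
def coronaProd {V W : Type*} (G : SimpleGraph V) (H : SimpleGraph W) :
    SimpleGraph (V ⊕ V × W) :=
  SimpleGraph.fromRel (fun x y =>
    (∃ a b, x = Sum.inl a ∧ y = Sum.inl b ∧ G.Adj a b) ∨
    (∃ i w w', x = Sum.inr (i, w) ∧ y = Sum.inr (i, w') ∧ H.Adj w w') ∨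
    (∃ i w, x = Sum.inl i ∧ y = Sum.inr (i, w)))

/-- The lexicographic product `G ∘ H`. -/
def lexProd {V W : Type*} (G : SimpleGraph V) (H : SimpleGraph W) :
    SimpleGraph (V × W) where
  Adj x y := G.Adj x.1 y.1 ∨ (x.1 = y.1 ∧ H.Adj x.2 y.2)
  symm := ⟨fun x y h => by
    rcases h with h | ⟨h1, h2⟩
    · exact Or.inl h.symm
    · exact Or.inr ⟨h1.symm, h2.symm⟩⟩
  loopless := ⟨fun x h => by
    rcases h with h | ⟨_, h⟩
    · exact G.loopless.irrefl _ h
    · exact H.loopless.irrefl _ h⟩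

/-- `B` induces a 2-connected subgraph of `G`. -/
def IsTwoConnSet {V : Type*} (G : SimpleGraph V) (B : Set V) : Prop :=
  3 ≤ B.ncard ∧ (G.induce B).Connected ∧ ∀ v ∈ B, (G.induce (B \ {v})).Connected


section Aux

lemma dist_eq_two' {V : Type*} {G : SimpleGraph V} {x y w : V}
    (hxy : x ≠ y) (hadj : ¬ G.Adj x y) (h1 : G.Adj x w) (h2 : G.Adj w y) :
    G.dist x y = 2 := by
  have hp : G.dist x y ≤ 2 := by
    have := G.dist_le (Walk.cons h1 (Walk.cons h2 Walk.nil))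
    simpa using this
  have hr : G.Reachable x y := ⟨Walk.cons h1 (Walk.cons h2 Walk.nil)⟩
  have h0 : G.dist x y ≠ 0 := fun h => hxy (hr.dist_eq_zero_iff.mp h)
  have h1' : G.dist x y ≠ 1 := fun h => hadj (dist_eq_one_iff_adj.mp h)
  omega

lemma mid_of_length_two {V : Type*} {G : SimpleGraph V} {x y : V}
    (p : G.Walk x y) (hl : p.length = 2) :
    ∃ w, G.Adj x w ∧ G.Adj w y ∧ w ∈ p.support := by
  cases p with
  | nil => simp at hl
  | cons h q =>
    cases q with
    | nil => simp at hl
    | cons h' q' =>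
      cases q' with
      | nil => exact ⟨_, h, h', by simp⟩
      | cons h'' q'' => simp [Walk.length_cons] at hl

lemma isTMV_of_common {V : Type*} {G : SimpleGraph V} {X : Set V}
    (h : ∀ x y : V, x ≠ y → ¬ G.Adj x y → ∃ w, w ∉ X ∧ G.Adj x w ∧ G.Adj w y) :
    IsTMVSet G X := by
  intro x y
  by_cases hxy : x = y
  · subst hxy
    exact ⟨Walk.nil, by simp [SimpleGraph.dist_self], by simp⟩
  by_cases hadj : G.Adj x y
  · refine ⟨hadj.toWalk, ?_, ?_⟩
    · rw [dist_eq_one_iff_adj.mpr hadj]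
      simp [SimpleGraph.Adj.toWalk]
    · intro w hw hwx hwy
      simp [SimpleGraph.Adj.toWalk, Walk.support_cons] at hw
      tauto
  · obtain ⟨w, hwX, h1, h2⟩ := h x y hxy hadj
    refine ⟨Walk.cons h1 (Walk.cons h2 Walk.nil), ?_, ?_⟩
    · rw [dist_eq_two' hxy hadj h1 h2]
      simp
    · intro z hz hzx hzy
      simp [Walk.support_cons] at hz
      rcases hz with rfl | rfl | rfl
      · exact absurd rfl hzx
      · exact hwX
      · exact absurd rfl hzy

lemma exists_common_notin {V : Type*} {G : SimpleGraph V} {X : Set V}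
    (hX : IsTMVSet G X) {x y w0 : V} (hxy : x ≠ y) (hadj : ¬ G.Adj x y)
    (h1 : G.Adj x w0) (h2 : G.Adj w0 y) :
    ∃ w, w ∉ X ∧ G.Adj x w ∧ G.Adj w y := by
  obtain ⟨p, hl, hs⟩ := hX x y
  rw [dist_eq_two' hxy hadj h1 h2] at hl
  obtain ⟨w, ha1, ha2, hmem⟩ := mid_of_length_two p hl
  exact ⟨w, hs w hmem ha1.ne' ha2.ne, ha1, ha2⟩

variable {V W : Type*} {G : SimpleGraph V} {H : SimpleGraph W}

lemma join_adj_inl_inr (a : V) (b : W) : (joinGraph G H).Adj (Sum.inl a) (Sum.inr b) := by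
  rw [joinGraph, fromRel_adj]
  exact ⟨by simp, Or.inl (Or.inr (Or.inr ⟨a, b, rfl, rfl⟩))⟩

lemma join_adj_inl_inl {a b : V} : (joinGraph G H).Adj (Sum.inl a) (Sum.inl b) ↔ G.Adj a b := by
  rw [joinGraph, fromRel_adj]
  constructor
  · rintro ⟨hne, (⟨a', b', ha, hb, hab⟩ | ⟨_, _, h, _⟩ | ⟨_, _, _, h⟩) |
      (⟨a', b', ha, hb, hab⟩ | ⟨_, _, h, _⟩ | ⟨_, _, _, h⟩)⟩ <;>
      first
      | (cases ha; cases hb; first | exact hab | exact hab.symm)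
      | simp_all
  · intro hab
    exact ⟨by simpa using hab.ne, Or.inl (Or.inl ⟨a, b, rfl, rfl, hab⟩)⟩

lemma join_adj_inr_inr {a b : W} : (joinGraph G H).Adj (Sum.inr a) (Sum.inr b) ↔ H.Adj a b := by
  rw [joinGraph, fromRel_adj]
  constructor
  · rintro ⟨hne, (⟨_, _, h, _⟩ | ⟨a', b', ha, hb, hab⟩ | ⟨_, _, h, _⟩) |
      (⟨_, _, h, _⟩ | ⟨a', b', ha, hb, hab⟩ | ⟨_, _, _, _, h⟩)⟩ <;>
      first
      | (cases ha; cases hb; first | exact hab | exact hab.symm)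
      | simp_all
  · intro hab
    exact ⟨by simpa using hab.ne, Or.inl (Or.inr (Or.inl ⟨a, b, rfl, rfl, hab⟩))⟩

lemma gamma_eq_one_iff {α : Type*} [Fintype α] [Nonempty α] {K : SimpleGraph α}
    (h : gammaDom K = 1) : ∃ g : α, ∀ x, x ≠ g → K.Adj g x := by
  have hne : {n : ℕ | ∃ D : Set α, IsDomSet K D ∧ D.ncard = n}.Nonempty :=
    ⟨(Set.univ : Set α).ncard, Set.univ, fun v hv => absurd (Set.mem_univ v) hv, rfl⟩
  have hmem := Nat.sInf_mem hne
  rw [show sInf {n : ℕ | ∃ D : Set α, IsDomSet K D ∧ D.ncard = n} = gammaDom K from rfl,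
    h] at hmem
  obtain ⟨D, hD, hcard⟩ := hmem
  obtain ⟨g, rfl⟩ := Set.ncard_eq_one.mp hcard
  refine ⟨g, fun x hx => ?_⟩
  obtain ⟨u, hu, huadj⟩ := hD x (by simpa using hx)
  rw [Set.mem_singleton_iff] at hu
  subst hu
  exact huadj

lemma gamma_ne_one_iff {α : Type*} [Fintype α] [Nonempty α] {K : SimpleGraph α}
    (h : gammaDom K ≠ 1) : ∀ g : α, ∃ x, x ≠ g ∧ ¬ K.Adj g x := by
  intro g
  by_contra hc
  push_neg at hc
  apply h
  have h1 : (1 : ℕ) ∈ {n : ℕ | ∃ D : Set α, IsDomSet K D ∧ D.ncard = n} := by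
    refine ⟨{g}, fun v hv => ⟨g, rfl, hc v (by simpa using hv)⟩, Set.ncard_singleton g⟩
  have hle : gammaDom K ≤ 1 := Nat.sInf_le h1
  have hne0 : gammaDom K ≠ 0 := by
    intro h0
    have hne : {n : ℕ | ∃ D : Set α, IsDomSet K D ∧ D.ncard = n}.Nonempty := ⟨1, h1⟩
    have hmem := Nat.sInf_mem hne
    rw [show sInf {n : ℕ | ∃ D : Set α, IsDomSet K D ∧ D.ncard = n} = gammaDom K from rfl,
      h0] at hmem
    obtain ⟨D, hD, hcard⟩ := hmem
    have hDe : D = ∅ := by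
      rw [Set.ncard_eq_zero (Set.toFinite D)] at hcard
      exact hcard
    subst hDe
    obtain ⟨u, hu, -⟩ := hD (Classical.arbitrary α) (by simp)
    exact hu
  omega

lemma existsNA {α : Type*} (K : SimpleGraph α) (hK : K ≠ ⊤) :
    ∃ a b, a ≠ b ∧ ¬ K.Adj a b := by
  by_contra hc
  push_neg at hc
  apply hK
  ext a b
  simp only [top_adj]
  exact ⟨fun hab => hab.ne, fun hab => hc a b hab⟩

end Aux

/-- Total mutual-visibility number of a join graph. -/
theorem muT_joinGraph {V W : Type*} [Fintype V] [Fintype W] [Nonempty V] [Nonempty W]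
    (G : SimpleGraph V) (H : SimpleGraph W) (h : ¬(G = ⊤ ∧ H = ⊤)) :
    (gammaDom G = 1 → muT (joinGraph G H) = Fintype.card V + Fintype.card W - 1) ∧
    (gammaDom G ≠ 1 → gammaDom H ≠ 1 →
      muT (joinGraph G H) = Fintype.card V + Fintype.card W - 2) := by
  classical
  set N := Fintype.card V + Fintype.card W with hN
  set J := joinGraph G H with hJ
  set S := {n : ℕ | ∃ X : Set (V ⊕ W), IsTMVSet J X ∧ X.ncard = n} with hS
  have hcard : (Set.univ : Set (V ⊕ W)).ncard = N := by
    rw [Set.ncard_univ, Nat.card_eq_fintype_card, Fintype.card_sum]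
  have hbdd : BddAbove S := by
    refine ⟨N, ?_⟩
    rintro n ⟨X, -, rfl⟩
    rw [← hcard]
    exact Set.ncard_le_ncard (Set.subset_univ X) Set.finite_univ
  have keyG : ∀ (X : Set (V ⊕ W)), IsTMVSet J X → ∀ a b : V, a ≠ b → ¬ G.Adj a b →
      ∃ z, z ∉ X ∧ J.Adj (Sum.inl a) z ∧ J.Adj z (Sum.inl b) := by
    intro X hX a b hab hnadj
    have w0 : W := Classical.arbitrary W
    exact exists_common_notin hX (by simp [hab])
      (fun hc => hnadj (join_adj_inl_inl.mp hc))
      (join_adj_inl_inr a w0) ((join_adj_inl_inr b w0).symm)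
  have keyH : ∀ (X : Set (V ⊕ W)), IsTMVSet J X → ∀ a b : W, a ≠ b → ¬ H.Adj a b →
      ∃ z, z ∉ X ∧ J.Adj (Sum.inr a) z ∧ J.Adj z (Sum.inr b) := by
    intro X hX a b hab hnadj
    have v0 : V := Classical.arbitrary V
    exact exists_common_notin hX (by simp [hab])
      (fun hc => hnadj (join_adj_inr_inr.mp hc))
      ((join_adj_inl_inr v0 a).symm) (join_adj_inl_inr v0 b)
  constructor
  · -- part (i)
    intro h1
    obtain ⟨g, hg⟩ := gamma_eq_one_iff h1
    -- the witness set
    set X : Set (V ⊕ W) := Set.univ \ {Sum.inl g} with hXdef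
    have hXtmv : IsTMVSet J X := by
      apply isTMV_of_common
      rintro (a | a) (b | b) hxy hnadj
      · have hab : a ≠ b := fun hc => hxy (by rw [hc])
        have hnG : ¬ G.Adj a b := fun hc => hnadj (join_adj_inl_inl.mpr hc)
        have hag : a ≠ g := by
          rintro rfl
          exact hnG (hg b (fun hc => hab hc.symm))
        have hbg : b ≠ g := by
          rintro rfl
          exact hnG ((hg a hag).symm)
        exact ⟨Sum.inl g, by simp [hXdef], join_adj_inl_inl.mpr (hg a hag).symm,
          join_adj_inl_inl.mpr (hg b hbg)⟩
      · exact absurd (join_adj_inl_inr a b) hnadj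
      · exact absurd ((join_adj_inl_inr b a).symm) hnadj
      · exact ⟨Sum.inl g, by simp [hXdef], (join_adj_inl_inr g a).symm,
          join_adj_inl_inr g b⟩
    have hXcard : X.ncard = N - 1 := by
      rw [hXdef, Set.ncard_diff (Set.subset_univ _) (Set.toFinite _), hcard,
        Set.ncard_singleton]
    have hmem : N - 1 ∈ S := ⟨X, hXtmv, hXcard⟩
    refine le_antisymm ?_ (le_csSup hbdd hmem)
    apply csSup_le ⟨N - 1, hmem⟩
    rintro n ⟨X', hX', rfl⟩
    obtain ⟨z, hz, -, -⟩ :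
        ∃ z, z ∉ X' ∧ True ∧ True := by
      rcases not_and_or.mp h with hG | hH
      · obtain ⟨a, b, hab, hnadj⟩ := existsNA G hG
        obtain ⟨z, hz, -, -⟩ := keyG X' hX' a b hab hnadj
        exact ⟨z, hz, trivial, trivial⟩
      · obtain ⟨a, b, hab, hnadj⟩ := existsNA H hH
        obtain ⟨z, hz, -, -⟩ := keyH X' hX' a b hab hnadj
        exact ⟨z, hz, trivial, trivial⟩
    have hsub : X' ⊆ Set.univ \ {z} := fun w hw =>
      ⟨Set.mem_univ w, fun hc => hz (by rwa [Set.mem_singleton_iff.mp hc] at hw)⟩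
    calc X'.ncard ≤ (Set.univ \ {z}).ncard :=
          Set.ncard_le_ncard hsub (Set.toFinite _)
      _ = N - 1 := by
          rw [Set.ncard_diff (Set.subset_univ _) (Set.toFinite _), hcard,
            Set.ncard_singleton]
  · -- part (ii)
    intro h1 h2
    have hG := gamma_ne_one_iff h1
    have hH := gamma_ne_one_iff h2
    have g0 : V := Classical.arbitrary V
    have w0 : W := Classical.arbitrary W
    set X : Set (V ⊕ W) := Set.univ \ {Sum.inl g0, Sum.inr w0} with hXdef
    have hXtmv : IsTMVSet J X := by
      apply isTMV_of_common
      rintro (a | a) (b | b) hxy hnadj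
      · exact ⟨Sum.inr w0, by simp [hXdef], join_adj_inl_inr a w0,
          (join_adj_inl_inr b w0).symm⟩
      · exact absurd (join_adj_inl_inr a b) hnadj
      · exact absurd ((join_adj_inl_inr b a).symm) hnadj
      · exact ⟨Sum.inl g0, by simp [hXdef], (join_adj_inl_inr g0 a).symm,
          join_adj_inl_inr g0 b⟩
    have hXcard : X.ncard = N - 2 := by
      rw [hXdef, Set.ncard_diff (Set.subset_univ _) (Set.toFinite _), hcard,
        Set.ncard_pair (by simp)]
    have hmem : N - 2 ∈ S := ⟨X, hXtmv, hXcard⟩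
    refine le_antisymm ?_ (le_csSup hbdd hmem)
    apply csSup_le ⟨N - 2, hmem⟩
    rintro n ⟨X', hX', rfl⟩
    -- first missing vertex
    obtain ⟨x1, hx1ne, hx1na⟩ := hG g0
    obtain ⟨z1, hz1, -, -⟩ := keyG X' hX' g0 x1 (fun hc => hx1ne hc.symm)
      hx1na
    -- second
    have hz2 : ∃ z2, z2 ∉ X' ∧ z2 ≠ z1 := by
      by_contra hc
      push_neg at hc
      cases z1 with
      | inl g =>
        obtain ⟨x, hxne, hxna⟩ := hG g
        obtain ⟨z, hz, hadj1, -⟩ := keyG X' hX' g x (fun hcc => hxne hcc.symm) hxna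
        have := hc z hz
        rw [this] at hadj1
        exact J.loopless.irrefl _ hadj1
      | inr w =>
        obtain ⟨x, hxne, hxna⟩ := hH w
        obtain ⟨z, hz, hadj1, -⟩ := keyH X' hX' w x (fun hcc => hxne hcc.symm) hxna
        have := hc z hz
        rw [this] at hadj1
        exact J.loopless.irrefl _ hadj1
    obtain ⟨z2, hz2n, hz2ne⟩ := hz2
    have hsub : X' ⊆ Set.univ \ {z1, z2} := by
      intro w hw
      refine ⟨Set.mem_univ w, fun hcc => ?_⟩
      rcases hcc with hcc | hcc
      · exact hz1 (by rwa [hcc] at hw)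
      · exact hz2n (by rwa [hcc] at hw)
    calc X'.ncard ≤ (Set.univ \ {z1, z2}).ncard :=
          Set.ncard_le_ncard hsub (Set.toFinite _)
      _ = N - 2 := by
          rw [Set.ncard_diff (Set.subset_univ _) (Set.toFinite _), hcard,
            Set.ncard_pair (fun hcc => hz2ne hcc.symm)]
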